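/- arXiv:2508.15062 — 2 statements merged into one kernel-verified Lean document; each statement's English description precedes it below -/
import Mathlib

section
/- Let K be a field of characteristic zero, I ⊆ R an ideal, ζ ∈ K^n, and let φ be the K-algebra automorphism of R with φ(x_i) = x_i − ζ_i for all i. Let B ⊆ ℕ^n be a finite downward-closed (staircase) set of exponents such that the residues { x^α + I : α ∈ B } form a K-basis of R/I. Then the residues { x^α + φ(I) : α ∈ B } form a K-basis of R/φ(I), where φ(I) denotes the image ideal. In particular, a complete staircase basis of a local Artinian algebra supported at ζ remains a basis after translating the support to the origin. -/
open MvPolynomial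

section Aux

variable {K : Type*} [Field K] {n : ℕ}

lemma support_C_eq_zero {c : K} : ∀ β ∈ (C c : MvPolynomial (Fin n) K).support, β = 0 := by
  classical
  intro β hβ
  rw [MvPolynomial.C_apply, MvPolynomial.support_monomial] at hβ
  split_ifs at hβ
  · simp at hβ
  · simpa using hβ

lemma aux_pow_support (c : K) (i : Fin n) (k : ℕ) :
    ∀ β ∈ ((X i + C c : MvPolynomial (Fin n) K) ^ k).support, β ≤ Finsupp.single i k := by
  classical
  induction k with
  | zero =>
    intro β hβ
    rw [pow_zero] at hβ
    have h1 : (1 : MvPolynomial (Fin n) K) = C 1 := by simp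
    rw [h1] at hβ
    have : β = 0 := support_C_eq_zero β hβ
    simp [this]
  | succ k ih =>
    intro β hβ
    rw [pow_succ] at hβ
    have := MvPolynomial.support_mul _ _ hβ
    rw [Finset.mem_add] at this
    obtain ⟨u, hu, v, hv, huv⟩ := this
    have hu' : u ≤ Finsupp.single i k := ih u hu
    have hv' : v ≤ Finsupp.single i 1 := by
      have := MvPolynomial.support_add (p := (X i : MvPolynomial (Fin n) K)) (q := C c) hv
      rw [Finset.mem_union] at this
      rcases this with h | h
      · rw [MvPolynomial.support_X] at h
        simp only [Finset.mem_singleton] at h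
        exact le_of_eq h
      · have := support_C_eq_zero v h
        simp [this]
    have : β ≤ Finsupp.single i k + Finsupp.single i 1 := huv ▸ add_le_add hu' hv'
    simpa [← Finsupp.single_add] using this

lemma aux_support (ψ : MvPolynomial (Fin n) K →ₐ[K] MvPolynomial (Fin n) K)
    (c : Fin n → K) (hψ : ∀ i, ψ (X i) = X i + C (c i)) (α : Fin n →₀ ℕ) :
    ∀ β ∈ (ψ (monomial α (1 : K))).support, β ≤ α := by
  classical
  induction α using Finsupp.induction with
  | zero =>
    intro β hβ
    have h1 : (monomial (0 : Fin n →₀ ℕ) (1 : K)) = C 1 := (MvPolynomial.C_apply).symm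
    rw [h1] at hβ
    have h2 : (C (1:K) : MvPolynomial (Fin n) K) = 1 := by simp
    rw [h2, map_one, ← h2] at hβ
    have : β = 0 := support_C_eq_zero β hβ
    simp [this]
  | single_add a b f ha hb ih =>
    intro β hβ
    have hsplit : (monomial (Finsupp.single a b + f) (1 : K))
        = monomial (Finsupp.single a b) 1 * monomial f 1 := by
      rw [MvPolynomial.monomial_mul, mul_one]
    rw [hsplit, map_mul] at hβ
    have := MvPolynomial.support_mul _ _ hβ
    rw [Finset.mem_add] at this
    obtain ⟨u, hu, v, hv, huv⟩ := this
    have hXa : (monomial (Finsupp.single a b) (1 : K)) = X a ^ b :=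
      (MvPolynomial.X_pow_eq_monomial).symm
    rw [hXa, map_pow, hψ a] at hu
    have hu' : u ≤ Finsupp.single a b := aux_pow_support (c a) a b u hu
    have hv' : v ≤ f := ih v hv
    exact huv ▸ add_le_add hu' hv'

end Aux

/-- if the residues of the monomials `x^α`, `α ∈ B` (with `B` a finite
staircase set of exponents), form a `K`-basis of `R/I`, then the residues of the same
monomials form a `K`-basis of `R/φ(I)`, where `φ` is the translation automorphism
`φ(x_i) = x_i − ζ_i`. -/
theorem stmt7 {K : Type*} [Field K] [CharZero K] {n : ℕ} (ζ : Fin n → K)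
    (I : Ideal (MvPolynomial (Fin n) K))
    (φ : MvPolynomial (Fin n) K ≃ₐ[K] MvPolynomial (Fin n) K)
    (hφ : ∀ i, φ (X i) = X i - C (ζ i))
    (B : Finset (Fin n →₀ ℕ)) (hB : ∀ α ∈ B, ∀ β : Fin n →₀ ℕ, β ≤ α → β ∈ B)
    (hli : LinearIndependent K
      (fun α : B => Ideal.Quotient.mk I (monomial (α : Fin n →₀ ℕ) (1 : K))))
    (hsp : Submodule.span K
      (Set.range fun α : B => Ideal.Quotient.mk I (monomial (α : Fin n →₀ ℕ) (1 : K))) = ⊤) :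
    LinearIndependent K
      (fun α : B => Ideal.Quotient.mk (I.map φ.toAlgHom.toRingHom)
        (monomial (α : Fin n →₀ ℕ) (1 : K))) ∧
    Submodule.span K
      (Set.range fun α : B => Ideal.Quotient.mk (I.map φ.toAlgHom.toRingHom)
        (monomial (α : Fin n →₀ ℕ) (1 : K))) = ⊤ := by
  classical
  set R := MvPolynomial (Fin n) K
  set J : Ideal R := I.map φ.toAlgHom.toRingHom with hJ
  set v : B → R := fun α => monomial (α : Fin n →₀ ℕ) (1 : K) with hv
  set V : Submodule K R := Submodule.span K (Set.range v) with hVdef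
  -- φ.symm (X i) = X i + C (ζ i)
  have hφsymm : ∀ i, φ.symm (X i) = X i + C (ζ i) := by
    intro i
    have h := congrArg φ.symm (hφ i)
    rw [AlgEquiv.symm_apply_apply, map_sub] at h
    have hC : φ.symm (C (ζ i)) = C (ζ i) := by
      have := φ.symm.commutes (ζ i)
      simpa [MvPolynomial.algebraMap_eq] using this
    rw [hC] at h
    rw [eq_sub_iff_add_eq] at h
    rw [← h]
  -- stability of V under any translation-type alg hom
  have hstab : ∀ (ψ : R →ₐ[K] R) (c : Fin n → K), (∀ i, ψ (X i) = X i + C (c i)) →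
      ∀ p ∈ V, ψ p ∈ V := by
    intro ψ c hψ p hp
    have hgen : ∀ α : B, ψ (v α) ∈ V := by
      intro α
      have hsum := (ψ (v α)).as_sum
      rw [hsum]
      apply Submodule.sum_mem
      intro β hβ
      have hβle : β ≤ (α : Fin n →₀ ℕ) := aux_support ψ c hψ (α : Fin n →₀ ℕ) β hβ
      have hβB : β ∈ B := hB (α : Fin n →₀ ℕ) α.2 β hβle
      have : monomial β (coeff β (ψ (v α))) = coeff β (ψ (v α)) • monomial β (1 : K) := by
        rw [MvPolynomial.smul_monomial, smul_eq_mul, mul_one]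
      rw [this]
      exact Submodule.smul_mem _ _ (Submodule.subset_span ⟨⟨β, hβB⟩, rfl⟩)
    have : V ≤ Submodule.comap ψ.toLinearMap V := by
      rw [hVdef]
      apply Submodule.span_le.2
      rintro _ ⟨α, rfl⟩
      exact hgen α
    exact this hp
  -- membership in J
  have hmemJ : ∀ p : R, p ∈ J ↔ φ.symm p ∈ I := by
    intro p
    have h : J = I.comap φ.toRingEquiv.symm := by
      rw [hJ]
      have h2 : φ.toAlgHom.toRingHom = (φ.toRingEquiv : R →+* R) := rfl
      rw [h2, Ideal.map_comap_of_equiv]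
    rw [h, Ideal.mem_comap]
    rfl
  -- V ⊓ I = 0
  have hdisjI : ∀ p ∈ V, p ∈ I → p = 0 := by
    intro p hp hpI
    obtain ⟨c, hc⟩ := (Submodule.mem_span_range_iff_exists_fun K).1 hp
    have h0 : ∑ α : B, c α • Ideal.Quotient.mk I (v α) = 0 := by
      have h1 := congrArg (Ideal.Quotient.mkₐ K I) hc
      rw [map_sum] at h1
      simp only [map_smul] at h1
      rw [show (Ideal.Quotient.mkₐ K I) p = 0 from (Ideal.Quotient.eq_zero_iff_mem).2 hpI] at h1
      simpa [Ideal.Quotient.mkₐ_eq_mk] using h1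
    have hc0 : ∀ α, c α = 0 := Fintype.linearIndependent_iff.1 hli c h0
    rw [← hc]
    simp [hc0]
  -- V ⊓ J = 0
  have hdisjJ : ∀ p ∈ V, p ∈ J → p = 0 := by
    intro p hp hpJ
    have h1 : φ.symm p ∈ V := hstab φ.symm.toAlgHom ζ hφsymm p hp
    have h2 : φ.symm p ∈ I := (hmemJ p).1 hpJ
    have := hdisjI _ h1 h2
    have := congrArg φ this
    simpa using this
  constructor
  · -- linear independence
    have hvli : LinearIndependent K v := by
      have := (MvPolynomial.basisMonomials (Fin n) K).linearIndependent
      have h2 := this.comp (Subtype.val : B → (Fin n →₀ ℕ)) Subtype.val_injective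
      convert h2 using 1
      · ext α; simp [hv, MvPolynomial.coe_basisMonomials]
      · rfl
      · rfl
    have hdis : Disjoint (Submodule.span K (Set.range v))
        (LinearMap.ker (Ideal.Quotient.mkₐ K J).toLinearMap) := by
      rw [Submodule.disjoint_def]
      intro p hp hpker
      apply hdisjJ p hp
      rw [LinearMap.mem_ker] at hpker
      exact (Ideal.Quotient.eq_zero_iff_mem).1 hpker
    have key := hvli.map (f := (Ideal.Quotient.mkₐ K J).toLinearMap) hdis
    exact key
  · -- spanning
    rw [eq_top_iff]
    rintro x -
    obtain ⟨p, rfl⟩ := Ideal.Quotient.mk_surjective x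
    -- find r ∈ V with mk I (φ.symm p) = mk I r
    have hmapI : Submodule.span K (Set.range fun α : B => Ideal.Quotient.mk I (v α))
        = Submodule.map (Ideal.Quotient.mkₐ K I).toLinearMap V := by
      rw [hVdef, Submodule.map_span]
      congr 1
      rw [← Set.range_comp]
      rfl
    have hq : Ideal.Quotient.mk I (φ.symm p) ∈
        Submodule.map (Ideal.Quotient.mkₐ K I).toLinearMap V := by
      rw [← hmapI, hsp]; trivial
    obtain ⟨r, hrV, hr⟩ := hq
    have hsub : φ.symm p - r ∈ I := by
      have : Ideal.Quotient.mk I (φ.symm p - r) = 0 := by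
        rw [map_sub, sub_eq_zero]
        exact (hr.symm : _)
      exact (Ideal.Quotient.eq_zero_iff_mem).1 this
    have hφr : φ r ∈ V := by
      apply hstab φ.toAlgHom (fun i => -ζ i) _ r hrV
      intro i
      simpa [sub_eq_add_neg] using hφ i
    have hdiff : p - φ r ∈ J := by
      have : φ (φ.symm p - r) = p - φ r := by rw [map_sub, AlgEquiv.apply_symm_apply]
      rw [← this]
      exact Ideal.mem_map_of_mem _ hsub
    have heq : Ideal.Quotient.mk J p = Ideal.Quotient.mk J (φ r) := by
      rw [Ideal.Quotient.mk_eq_mk_iff_sub_mem]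
      exact hdiff
    rw [heq]
    have hmapJ : Submodule.span K (Set.range fun α : B => Ideal.Quotient.mk J (v α))
        = Submodule.map (Ideal.Quotient.mkₐ K J).toLinearMap V := by
      rw [hVdef, Submodule.map_span]
      congr 1
      rw [← Set.range_comp]
      rfl
    rw [hmapJ]
    exact ⟨φ r, hφr, rfl⟩
end

section
/- Let K be a field of characteristic zero and Λ ∈ R* such that A := R/Ann(Λ) is finite-dimensional over K. Then A is Gorenstein with dual generator Λ: concretely, for every K-linear functional g : A → K there exists p ∈ R such that g(q + Ann(Λ)) = Λ(p·q) for all q ∈ R. Equivalently, the map R → Hom_K(A, K) sending p to the functional (q + Ann(Λ)) ↦ Λ(p·q) is well defined and surjective, i.e. the dual of A is a cyclic A-module generated by Λ under contraction. -/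
open MvPolynomial

/-- The annihilator `Ann(Λ) = { p : ∀ q, Λ(p·q) = 0 }` of a linear functional `Λ` on
`R = K[x_1,…,x_n]`, as an ideal of `R`. -/
def annIdeal {K : Type*} [Field K] {n : ℕ}
    (Λ : Module.Dual K (MvPolynomial (Fin n) K)) : Ideal (MvPolynomial (Fin n) K) where
  carrier := {p | ∀ q, Λ (p * q) = 0}
  add_mem' := by
    intro a b ha hb q
    rw [add_mul, map_add, ha q, hb q, add_zero]
  zero_mem' := by
    intro q
    rw [zero_mul, map_zero]
  smul_mem' := by
    intro c p hp q
    have h := hp (c * q)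
    rw [smul_eq_mul, show c * p * q = p * (c * q) by ring]
    exact h

set_option maxHeartbeats 1000000 in
private theorem stmt11_aux {K : Type*} [Field K] {n : ℕ}
    (Λ : Module.Dual K (MvPolynomial (Fin n) K))
    (I : Ideal (MvPolynomial (Fin n) K))
    (hI : ∀ p, p ∈ I ↔ ∀ q, Λ (p * q) = 0)
    (hfin : FiniteDimensional K (MvPolynomial (Fin n) K ⧸ I)) :
    ∀ g : Module.Dual K (MvPolynomial (Fin n) K ⧸ I),
      ∃ p : MvPolynomial (Fin n) K, ∀ q : MvPolynomial (Fin n) K,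
        g (Ideal.Quotient.mk I q) = Λ (p * q) := by
  set R := MvPolynomial (Fin n) K
  set A := R ⧸ I
  let B : R →ₗ[K] Module.Dual K R := (LinearMap.mul K R).compr₂ Λ
  have hB : ∀ p q : R, B p q = Λ (p * q) := fun p q => rfl
  let mkₗ : R →ₗ[K] A := (Ideal.Quotient.mkₐ K I).toLinearMap
  have hmk : ∀ q : R, mkₗ q = Ideal.Quotient.mk I q := fun q => rfl
  have hmksurj : Function.Surjective mkₗ := fun x => Ideal.Quotient.mk_surjective x
  let mkd : Module.Dual K A →ₗ[K] Module.Dual K R := mkₗ.dualMap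
  have hmkdinj : Function.Injective mkd := LinearMap.dualMap_injective_of_surjective hmksurj
  -- each B p factors through the quotient
  have hle : LinearMap.range B ≤ LinearMap.range mkd := by
    rintro - ⟨p, rfl⟩
    have hkill : ∀ q ∈ I.restrictScalars K, B p q = 0 := by
      intro q hq
      simpa [hB, mul_comm] using (hI q).mp hq p
    let e : (R ⧸ I.restrictScalars K) ≃ₗ[K] A :=
      Submodule.Quotient.restrictScalarsEquiv K I
    refine ⟨(Submodule.liftQ (I.restrictScalars K) (B p) hkill).comp e.symm.toLinearMap, ?_⟩
    refine LinearMap.ext fun q => ?_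
    show (Submodule.liftQ (I.restrictScalars K) (B p) hkill) (e.symm (mkₗ q)) = B p q
    have : e.symm (mkₗ q) = Submodule.Quotient.mk q :=
      Submodule.Quotient.restrictScalarsEquiv_symm_mk K I q
    rw [this]
    exact Submodule.liftQ_apply _ _ _
  have hker : LinearMap.ker B = I.restrictScalars K := by
    ext p
    simp only [LinearMap.mem_ker, Submodule.restrictScalars_mem]
    constructor
    · intro hp
      exact (hI p).mpr fun q => by
        have := congrFun (congrArg DFunLike.coe hp) q
        simpa [hB] using this
    · intro hp
      refine LinearMap.ext fun q => ?_
      simpa [hB] using (hI p).mp hp q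
  haveI : FiniteDimensional K (LinearMap.range mkd) :=
    LinearEquiv.finiteDimensional (LinearEquiv.ofInjective mkd hmkdinj)
  have heq : LinearMap.range B = LinearMap.range mkd := by
    apply Submodule.eq_of_le_of_finrank_le hle
    have h1 : Module.finrank K (LinearMap.range mkd) = Module.finrank K (Module.Dual K A) :=
      (LinearEquiv.ofInjective mkd hmkdinj).finrank_eq.symm
    have eq1 : (R ⧸ LinearMap.ker B) ≃ₗ[K] LinearMap.range B := B.quotKerEquivRange
    rw [hker] at eq1
    have e2 : (R ⧸ I.restrictScalars K) ≃ₗ[K] A :=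
      Submodule.Quotient.restrictScalarsEquiv K I
    exact le_of_eq (h1.trans ((Subspace.dual_finrank_eq (K := K) (V := A)).trans
      (e2.symm.finrank_eq.trans eq1.finrank_eq)))
  intro g
  have hg : mkd g ∈ LinearMap.range B := heq ▸ LinearMap.mem_range_self mkd g
  obtain ⟨p, hp⟩ := hg
  refine ⟨p, fun q => ?_⟩
  have := congrFun (congrArg DFunLike.coe hp) q
  simpa [hB, mkd, hmk] using this.symm


/-- if `A = R/Ann(Λ)` is finite dimensional, then `A` is Gorenstein with dual
generator `Λ`: every `K`-linear functional on `A` is of the form `q + Ann(Λ) ↦ Λ(p·q)` for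
some `p ∈ R`, i.e. the dual of `A` is a cyclic `A`-module generated by `Λ` under
contraction. -/
theorem stmt11 {K : Type*} [Field K] [CharZero K] {n : ℕ}
    (Λ : Module.Dual K (MvPolynomial (Fin n) K))
    (hfin : FiniteDimensional K (MvPolynomial (Fin n) K ⧸ annIdeal Λ)) :
    ∀ g : Module.Dual K (MvPolynomial (Fin n) K ⧸ annIdeal Λ),
      ∃ p : MvPolynomial (Fin n) K, ∀ q : MvPolynomial (Fin n) K,
        g (Ideal.Quotient.mk (annIdeal Λ) q) = Λ (p * q) :=
  stmt11_aux Λ (annIdeal Λ) (fun _ => Iff.rfl) hfin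
end
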